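/- Let φ : [0,1] → [0,∞) be a nondecreasing function with φ(h) > 0 for h > 0, and suppose there exists θ ∈ (0,1) such that for all h ∈ (0,1], (1/h)·∫₀ʰ φ(t) dt ≥ θ·h·φ(h)·(1/h), i.e. ∫₀ʰ φ(t) dt ≥ θ·h·φ(h). Then, setting F(h) = ∫₀ʰ φ(t) dt, one has F(h)/F(1) ≥ h^{1/θ} for all h ∈ (0,1]. -/

import Mathlib

open MeasureTheory intervalIntegral

theorem stmt0 (φ : ℝ → ℝ) (hmono : MonotoneOn φ (Set.Icc 0 1))
    (hnonneg : ∀ t ∈ Set.Icc (0:ℝ) 1, 0 ≤ φ t)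
    (hint : IntervalIntegrable φ volume 0 1)
    (hpos : ∀ h ∈ Set.Ioc (0:ℝ) 1, 0 < φ h)
    (θ : ℝ) (hθ0 : 0 < θ) (hθ1 : θ < 1)
    (hH : ∀ h ∈ Set.Ioc (0:ℝ) 1, θ * h * φ h ≤ ∫ t in (0:ℝ)..h, φ t) :
    ∀ h ∈ Set.Ioc (0:ℝ) 1,
      h ^ (1/θ) ≤ (∫ t in (0:ℝ)..h, φ t) / (∫ t in (0:ℝ)..1, φ t) := by
  set G : ℝ → ℝ := fun x => ∫ t in (0:ℝ)..x, φ t with hG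
  -- integrability on subintervals
  have hsub : ∀ a b : ℝ, 0 ≤ a → a ≤ b → b ≤ 1 → IntervalIntegrable φ volume a b := by
    intro a b ha hab hb
    refine hint.mono_set ?_
    rw [Set.uIcc_of_le zero_le_one, Set.uIcc_of_le hab]
    exact Set.Icc_subset_Icc ha hb
  -- continuity of G on [0,1]
  have hGcont : ContinuousOn G (Set.Icc 0 1) := by
    have := continuousOn_primitive_interval' (μ := volume) (f := φ) (b₁ := (0:ℝ)) (b₂ := 1)
      hint Set.left_mem_uIcc
    rwa [Set.uIcc_of_le zero_le_one] at this
  -- positivity of G on (0,1]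
  have hGpos : ∀ x ∈ Set.Ioc (0:ℝ) 1, 0 < G x := by
    intro x hx
    have h1 : 0 < θ * x * φ x := by
      have := hpos x hx
      have := hx.1
      positivity
    exact lt_of_lt_of_le h1 (hH x hx)
  have hG1 : 0 < G 1 := hGpos 1 ⟨zero_lt_one, le_rfl⟩
  intro h hh
  have hh0 : 0 < h := hh.1
  have hh1 : h ≤ 1 := hh.2
  have hGh : 0 < G h := hGpos h hh
  -- main step: for every c > 1/θ, G 1 ≤ G h * (1/h)^c
  have key : ∀ c : ℝ, 1/θ < c → h ^ c * G 1 ≤ G h := by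
    intro c hc
    have hc0 : 0 < c := lt_trans (by positivity) hc
    set B : ℝ → ℝ := fun x => G h * (x / h) ^ c with hB
    set B' : ℝ → ℝ := fun x => G h * (c * (x / h) ^ (c - 1) * (1 / h)) with hB'
    set f' : ℝ → ℝ := fun x => G x / (θ * x) with hf'def
    have main : ∀ ⦃x⦄, x ∈ Set.Icc h 1 → G x ≤ B x := by
      refine image_le_of_liminf_slope_right_lt_deriv_boundary' (f := G) (f' := f')
        (B := B) (B' := B') (a := h) (b := 1)
        (hGcont.mono (Set.Icc_subset_Icc hh0.le le_rfl)) ?_ ?_ ?_ ?_ ?_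
      · -- liminf slope bound
        intro x hx r hr
        have hx0 : 0 < x := lt_of_lt_of_le hh0 hx.1
        have hx1 : x < 1 := hx.2
        -- the auxiliary function z ↦ G z / (θ z) tends to f' x along 𝓝[>] x
        have hten : Filter.Tendsto (fun z => G z / (θ * z)) (nhdsWithin x (Set.Ioi x))
            (nhds (G x / (θ * x))) := by
          have hcw : ContinuousWithinAt (fun z => G z / (θ * z)) (Set.Icc 0 1) x := by
            refine ContinuousWithinAt.div (hGcont x ⟨hx0.le, hx1.le⟩) ?_ (by positivity)
            exact (continuous_const.mul continuous_id).continuousWithinAt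
          have hmem : Set.Ioc x 1 ∈ nhdsWithin x (Set.Ioi x) :=
            Ioc_mem_nhdsGT_of_mem ⟨le_rfl, hx1⟩
          have hle : nhdsWithin x (Set.Ioi x) ≤ nhdsWithin x (Set.Icc 0 1) := by
            refine le_trans (nhdsWithin_le_of_mem hmem) (nhdsWithin_mono x ?_)
            exact fun z hz => ⟨le_trans hx0.le hz.1.le, hz.2⟩
          exact hcw.tendsto.mono_left hle
        have hev1 : ∀ᶠ z in nhdsWithin x (Set.Ioi x), G z / (θ * z) < r :=
          hten.eventually_lt_const hr
        have hev2 : ∀ᶠ z in nhdsWithin x (Set.Ioi x), z ∈ Set.Ioc x 1 :=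
          Ioc_mem_nhdsGT_of_mem ⟨le_rfl, hx1⟩
        refine ((hev1.and hev2).mono ?_).frequently
        rintro z ⟨hzr, hz⟩
        have hzx : x < z := hz.1
        have hz1 : z ≤ 1 := hz.2
        -- slope G x z ≤ G z / (θ z)
        have hdiff : G z - G x = ∫ t in x..z, φ t := by
          exact integral_interval_sub_left (hsub 0 z le_rfl (le_trans hx0.le hzx.le) hz1) (hsub 0 x le_rfl hx0.le hx1.le)
        have hintxz : IntervalIntegrable φ volume x z := hsub x z hx0.le hzx.le hz1
        have hbound : (∫ t in x..z, φ t) ≤ (z - x) * φ z := by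
          have : (∫ t in x..z, φ t) ≤ ∫ _t in x..z, φ z := by
            refine integral_mono_on hzx.le hintxz intervalIntegrable_const ?_
            intro t ht
            exact hmono ⟨le_trans hx0.le ht.1, le_trans ht.2 hz1⟩
              ⟨le_trans hx0.le hzx.le, hz1⟩ ht.2
          simpa [intervalIntegral.integral_const, smul_eq_mul] using this
        have hφz : φ z ≤ G z / (θ * z) := by
          have h1 := hH z ⟨lt_trans hx0 hzx, hz1⟩
          have hz0 : 0 < z := lt_trans hx0 hzx
          rw [le_div_iff₀ (by positivity)]
          linarith [h1]
        have hslope : slope G x z ≤ G z / (θ * z) := by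
          rw [slope_def_field, div_le_iff₀ (by linarith)]
          calc G z - G x = ∫ t in x..z, φ t := hdiff
            _ ≤ (z - x) * φ z := hbound
            _ ≤ (z - x) * (G z / (θ * z)) := by
                refine mul_le_mul_of_nonneg_left hφz (by linarith)
            _ = G z / (θ * z) * (z - x) := by ring
        exact lt_of_le_of_lt hslope hzr
      · -- G h ≤ B h
        simp [hB, div_self hh0.ne', Real.one_rpow]
      · -- continuity of B
        refine continuousOn_const.mul ?_
        refine ContinuousOn.rpow_const ?_ ?_
        · exact (continuous_id.div_const h).continuousOn
        · intro x _; right; exact hc0.le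
      · -- derivative of B
        intro x hx
        have hx0 : 0 < x := lt_of_lt_of_le hh0 hx.1
        have h1 : HasDerivAt (fun y : ℝ => y / h) (1 / h) x := by
          simpa using (hasDerivAt_id x).div_const h
        have h2 : HasDerivAt (fun y : ℝ => (y / h) ^ c)
            (c * (x / h) ^ (c - 1) * (1 / h)) x := by
          have := (Real.hasDerivAt_rpow_const (x := x / h) (p := c)
            (Or.inl (by positivity))).comp x h1
          exact this.congr_deriv (by ring)
        exact ((h2.const_mul (G h)).hasDerivWithinAt).congr_deriv (by ring)
      · -- bound f' x < B' x when G x = B x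
        intro x hx hfx
        have hx0 : 0 < x := lt_of_lt_of_le hh0 hx.1
        have hxh : 0 < x / h := by positivity
        have hBpos : 0 < B x := by
          have : (0:ℝ) < (x / h) ^ c := Real.rpow_pos_of_pos hxh c
          exact mul_pos hGh this
        have hBeq : B' x = c * B x / x := by
          simp only [hB, hB']
          rw [show c - 1 = c + (-1) by ring, Real.rpow_add hxh, Real.rpow_neg_one]
          field_simp
        show G x / (θ * x) < B' x
        rw [hfx, hBeq]
        rw [div_lt_div_iff₀ (by positivity) hx0]
        have h2 : 1 < θ * c := by
          have h3 := hc
          rw [div_lt_iff₀ hθ0] at h3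
          linarith
        nlinarith [mul_pos hBpos hx0]
    have := main (Set.right_mem_Icc.2 hh1)
    -- G 1 ≤ G h * (1/h)^c, conclude h^c * G 1 ≤ G h
    have hBc : B 1 = G h * (1 / h) ^ c := by simp [hB]
    rw [hBc] at this
    have hpow : (1 / h) ^ c * h ^ c = 1 := by
      rw [← Real.mul_rpow (by positivity) hh0.le, one_div_mul_cancel hh0.ne', Real.one_rpow]
    calc h ^ c * G 1 ≤ h ^ c * (G h * (1 / h) ^ c) := by
          refine mul_le_mul_of_nonneg_left this (by positivity)
      _ = G h * ((1 / h) ^ c * h ^ c) := by ring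
      _ = G h := by rw [hpow, mul_one]
  -- take limit c → 1/θ⁺
  have hlim : h ^ (1/θ) * G 1 ≤ G h := by
    have hten : Filter.Tendsto (fun c : ℝ => h ^ c * G 1) (nhdsWithin (1/θ) (Set.Ioi (1/θ)))
        (nhds (h ^ (1/θ) * G 1)) := by
      have hcont : ContinuousAt (fun c : ℝ => h ^ c * G 1) (1/θ) := by
        exact (Real.continuousAt_const_rpow hh0.ne').mul continuousAt_const
      exact hcont.continuousWithinAt.tendsto
    refine le_of_tendsto hten ?_
    filter_upwards [self_mem_nhdsWithin] with c hc
    exact key c hc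
  rw [le_div_iff₀ hG1]
  exact hlim
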